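/- Let ξ have the Max-U-Exp(a, λ) distribution, let η be Exponential(1) independent of ξ, and let τ = η/ξ. Then τ has the Exp-Max-U-Exp(a, λ) distribution, i.e., P(τ ≤ t) = 1 - (1 - e^{-at})/(at) + (t/(a(λ+t)²))(1 - e^{-a(λ+t)}) for t > 0. -/

import Mathlib

open MeasureTheory Set

/-- The Max-U-Exp(a, λ) cumulative distribution function. -/
noncomputable def maxUExpCDF (a lam x : ℝ) : ℝ :=
  if x ≤ 0 then 0
  else if x ≤ a then (x / a) * (1 - Real.exp (-lam * x))
  else 1 - Real.exp (-lam * x)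

lemma maxUExpCDF_mem (a lam : ℝ) (ha : 0 < a) (hlam : 0 < lam) (x : ℝ) :
    0 ≤ maxUExpCDF a lam x ∧ maxUExpCDF a lam x ≤ 1 := by
  unfold maxUExpCDF
  split_ifs with h1 h2
  · exact ⟨le_rfl, zero_le_one⟩
  · push_neg at h1
    have he : Real.exp (-lam * x) ≤ 1 := by
      apply Real.exp_le_one_iff.mpr; nlinarith
    have he0 : 0 < Real.exp (-lam * x) := Real.exp_pos _
    constructor
    · apply mul_nonneg (by positivity) (by linarith)
    · have hx : x / a ≤ 1 := by rw [div_le_one ha]; exact h2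
      nlinarith [div_nonneg h1.le ha.le]
  · push_neg at h1
    have he : Real.exp (-lam * x) ≤ 1 := by
      apply Real.exp_le_one_iff.mpr; nlinarith
    have he0 : 0 < Real.exp (-lam * x) := Real.exp_pos _
    constructor <;> linarith

lemma measurable_maxUExpCDF (a lam : ℝ) : Measurable (maxUExpCDF a lam) := by
  unfold maxUExpCDF
  apply Measurable.ite (measurableSet_le measurable_id measurable_const)
    measurable_const
  apply Measurable.ite (measurableSet_le measurable_id measurable_const) <;> fun_prop

lemma maxUExpCDF_eq_of_mem (a lam s : ℝ) (h0 : 0 ≤ s) (h1 : s ≤ a) :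
    maxUExpCDF a lam s = s / a * (1 - Real.exp (-lam * s)) := by
  rcases eq_or_lt_of_le h0 with h | h
  · simp [maxUExpCDF, ← h]
  · unfold maxUExpCDF
    rw [if_neg (by linarith), if_pos h1]

lemma maxUExpCDF_eq_of_gt (a lam s : ℝ) (h0 : 0 < a) (h1 : a < s) :
    maxUExpCDF a lam s = 1 - Real.exp (-lam * s) := by
  unfold maxUExpCDF
  split_ifs with h2 h3
  · linarith
  · linarith
  · rfl

lemma hasDerivAt_phi (k : ℝ) (hk : k ≠ 0) (s : ℝ) :
    HasDerivAt (fun s => (s / k + 1 / k ^ 2) * Real.exp (-(k * s)))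
      (-(s * Real.exp (-(k * s)))) s := by
  have h1 : HasDerivAt (fun s : ℝ => s / k + 1 / k ^ 2) (1 / k) s := by
    exact HasDerivAt.add_const (1 / k ^ 2) ((hasDerivAt_id s).div_const k)
  have h2 : HasDerivAt (fun s : ℝ => Real.exp (-(k * s))) (-k * Real.exp (-(k * s))) s := by
    have h3 : HasDerivAt (fun s : ℝ => -(k * s)) (-k) s := by
      have := ((hasDerivAt_id s).const_mul k).neg; simp at this; exact this
    simpa [mul_comm] using h3.exp
  refine (h1.mul h2).congr_deriv ?_
  field_simp
  ring

lemma hasDerivAt_expneg (k : ℝ) (s : ℝ) :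
    HasDerivAt (fun s : ℝ => -Real.exp (-(k * s))) (k * Real.exp (-(k * s))) s := by
  have h3 : HasDerivAt (fun s : ℝ => -(k * s)) (-k) s := by
    have := ((hasDerivAt_id s).const_mul k).neg; simp at this; exact this
  have := h3.exp.neg; simp [mul_comm] at this; exact this

lemma integrableOn_g (a lam t : ℝ) (ha : 0 < a) (hlam : 0 < lam) (ht : 0 < t) :
    IntegrableOn (fun s => t * Real.exp (-(t * s)) * (1 - maxUExpCDF a lam s)) (Ioi 0) := by
  have hmeas : Measurable (fun s => t * Real.exp (-(t * s)) * (1 - maxUExpCDF a lam s)) := by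
    have := measurable_maxUExpCDF a lam
    fun_prop
  have hIoc : IntegrableOn (fun s => t * Real.exp (-(t * s)) * (1 - maxUExpCDF a lam s))
      (Ioc 0 a) := by
    apply Measure.integrableOn_of_bounded (M := t) measure_Ioc_lt_top.ne
      hmeas.aestronglyMeasurable
    filter_upwards [ae_restrict_mem measurableSet_Ioc] with s hs
    obtain ⟨hF0, hF1⟩ := maxUExpCDF_mem a lam ha hlam s
    have he1 : Real.exp (-(t * s)) ≤ 1 := Real.exp_le_one_iff.mpr (by nlinarith [hs.1])
    have he0 : 0 < Real.exp (-(t * s)) := Real.exp_pos _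
    have h01 : 0 ≤ 1 - maxUExpCDF a lam s := by linarith
    have hb1 : t * Real.exp (-(t * s)) * (1 - maxUExpCDF a lam s) ≤ t * Real.exp (-(t * s)) :=
      mul_le_of_le_one_right (by positivity) (by linarith)
    have hb2 : t * Real.exp (-(t * s)) ≤ t := by
      nlinarith
    rw [Real.norm_eq_abs, abs_of_nonneg (by positivity)]
    linarith
  have hIoi : IntegrableOn (fun s => t * Real.exp (-(t * s) ) * (1 - maxUExpCDF a lam s))
      (Ioi a) := by
    apply Integrable.mono' (g := fun s => t * Real.exp (-(lam + t) * s))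
    · exact (exp_neg_integrableOn_Ioi a (by linarith : (0:ℝ) < lam + t)).const_mul t
    · exact hmeas.aestronglyMeasurable
    · filter_upwards [ae_restrict_mem measurableSet_Ioi] with s hs
      rw [maxUExpCDF_eq_of_gt a lam s ha hs]
      have hkey : t * Real.exp (-(t*s)) * (1 - (1 - Real.exp (-lam * s)))
          = t * Real.exp (-(lam+t) * s) := by
        rw [show (-(lam+t) * s) = (-(t*s)) + (-lam * s) by ring, Real.exp_add]; ring
      rw [Real.norm_eq_abs, hkey, abs_of_nonneg (by positivity)]
  have : Ioi (0:ℝ) = Ioc 0 a ∪ Ioi a := (Ioc_union_Ioi_eq_Ioi ha.le).symm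
  rw [this]
  exact hIoc.union hIoi

lemma integral_g_value (a lam t : ℝ) (ha : 0 < a) (hlam : 0 < lam) (ht : 0 < t) :
    ∫ s in Ioi (0:ℝ), t * Real.exp (-(t * s)) * (1 - maxUExpCDF a lam s) =
      1 - (1 - Real.exp (-a * t)) / (a * t)
        + (t / (a * (lam + t) ^ 2)) * (1 - Real.exp (-a * (lam + t))) := by
  set c := lam + t with hcdef
  have hc : 0 < c := by positivity
  set g : ℝ → ℝ := fun s => t * Real.exp (-(t * s)) * (1 - maxUExpCDF a lam s) with hgdef
  have hIoc : IntegrableOn g (Ioc 0 a) :=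
    (integrableOn_g a lam t ha hlam ht).mono_set Ioc_subset_Ioi_self
  have hIoi : IntegrableOn g (Ioi a) :=
    (integrableOn_g a lam t ha hlam ht).mono_set (Ioi_subset_Ioi ha.le)
  have hsplit : ∫ s in Ioi (0:ℝ), g s = (∫ s in Ioc 0 a, g s) + ∫ s in Ioi a, g s := by
    rw [show Ioi (0:ℝ) = Ioc 0 a ∪ Ioi a from (Ioc_union_Ioi_eq_Ioi ha.le).symm]
    exact setIntegral_union (Ioc_disjoint_Ioi le_rfl) measurableSet_Ioi hIoc hIoi
  -- the tail integral
  have htail : ∫ s in Ioi a, g s = t / c * Real.exp (-(c * a)) := by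
    have heq : EqOn g (fun s => t * Real.exp (-(c * s))) (Ioi a) := by
      intro s hs
      simp only [hgdef]
      rw [maxUExpCDF_eq_of_gt a lam s ha hs,
        show (-(c * s)) = (-(t * s)) + (-lam * s) by rw [hcdef]; ring, Real.exp_add]
      ring
    rw [setIntegral_congr_fun measurableSet_Ioi heq]
    have hint : IntegrableOn (fun s => t * Real.exp (-(c * s))) (Ioi a) := by
      have := (exp_neg_integrableOn_Ioi a hc).const_mul t; simp only [neg_mul] at this; exact this
    have hder : ∀ x ∈ Ici a, HasDerivAt (fun s => -(t/c) * Real.exp (-(c * s)))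
        (t * Real.exp (-(c * x))) x := by
      intro x _
      have := HasDerivAt.const_mul (t/c) (hasDerivAt_expneg c x)
      have e : (fun s => -(t/c) * Real.exp (-(c * s))) = fun y => t/c * -Real.exp (-(c * y)) := by
        funext s; ring
      rw [e]; refine this.congr_deriv ?_
      rw [← mul_assoc, div_mul_cancel₀ t hc.ne']
    have htend : Filter.Tendsto (fun s => -(t/c) * Real.exp (-(c * s))) Filter.atTop (nhds 0) := by
      have h1 : Filter.Tendsto (fun s : ℝ => c * s) Filter.atTop Filter.atTop :=
        Filter.Tendsto.const_mul_atTop hc Filter.tendsto_id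
      have h2 : Filter.Tendsto (fun s : ℝ => Real.exp (-(c * s))) Filter.atTop (nhds 0) :=
        Real.tendsto_exp_neg_atTop_nhds_zero.comp h1
      simpa using h2.const_mul (-(t/c))
    have := integral_Ioi_of_hasDerivAt_of_tendsto' hder hint htend
    rw [this]; ring
  -- the head integral
  set H : ℝ → ℝ := fun s => -Real.exp (-(t * s))
      + (t/a) * ((s/t + 1/t^2) * Real.exp (-(t * s)))
      - (t/a) * ((s/c + 1/c^2) * Real.exp (-(c * s))) with hHdef
  have hhead : ∫ s in Ioc 0 a, g s = H a - H 0 := by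
    rw [← intervalIntegral.integral_of_le ha.le]
    apply intervalIntegral.integral_eq_sub_of_hasDerivAt
    · intro s hs
      rw [uIcc_of_le ha.le] at hs
      have h1 := hasDerivAt_expneg t s
      have h2 := HasDerivAt.const_mul (t/a) (hasDerivAt_phi t ht.ne' s)
      have h3 := HasDerivAt.const_mul (t/a) (hasDerivAt_phi c hc.ne' s)
      have hD := (h1.add h2).sub h3
      refine hD.congr_deriv ?_
      simp only [hgdef]
      rw [maxUExpCDF_eq_of_mem a lam s hs.1 hs.2,
        show (-(c * s)) = (-(t * s)) + (-lam * s) by rw [hcdef]; ring, Real.exp_add]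
      field_simp
      ring
    · rw [intervalIntegrable_iff_integrableOn_Ioc_of_le ha.le]
      exact hIoc
  rw [hsplit, hhead, htail]
  simp only [hHdef]
  rw [show (-a * t) = -(t * a) by ring, show (-a * c) = -(c * a) by ring]
  simp only [mul_zero, neg_zero, Real.exp_zero, zero_div, mul_one, zero_add]
  field_simp
  ring


theorem expMaxUExp_as_ratio {Ω : Type*} [MeasurableSpace Ω]
    (ℙ : Measure Ω) [IsProbabilityMeasure ℙ]
    (a lam : ℝ) (ha : 0 < a) (hlam : 0 < lam)
    (ξ η : Ω → ℝ) (hξm : Measurable ξ) (hηm : Measurable η)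
    (hξ : ∀ x : ℝ, (ℙ {ω | ξ ω ≤ x}).toReal = maxUExpCDF a lam x)
    (hη : ∀ y : ℝ, (ℙ {ω | η ω ≤ y}).toReal = if y ≤ 0 then 0 else 1 - Real.exp (-y))
    (hind : ProbabilityTheory.IndepFun ξ η ℙ) :
    ∀ t : ℝ, 0 < t →
      (ℙ {ω | η ω / ξ ω ≤ t}).toReal =
        1 - (1 - Real.exp (-a * t)) / (a * t)
          + (t / (a * (lam + t) ^ 2)) * (1 - Real.exp (-a * (lam + t))) := by
  intro t ht
  classical
  set μ := ℙ.map ξ with hμdef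
  set ν := ℙ.map η with hνdef
  haveI hμP : IsProbabilityMeasure μ := Measure.isProbabilityMeasure_map hξm.aemeasurable
  haveI hνP : IsProbabilityMeasure ν := Measure.isProbabilityMeasure_map hηm.aemeasurable
  have hμIic : ∀ x : ℝ, μ (Iic x) = ENNReal.ofReal (maxUExpCDF a lam x) := by
    intro x
    rw [hμdef, Measure.map_apply hξm measurableSet_Iic,
      show ξ ⁻¹' Iic x = {ω | ξ ω ≤ x} from rfl,
      ← ENNReal.ofReal_toReal (measure_ne_top ℙ _), hξ x]
  have hνIic : ∀ y : ℝ, 0 < y → ν (Iic y) = ENNReal.ofReal (1 - Real.exp (-y)) := by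
    intro y hy
    rw [hνdef, Measure.map_apply hηm measurableSet_Iic,
      show η ⁻¹' Iic y = {ω | η ω ≤ y} from rfl,
      ← ENNReal.ofReal_toReal (measure_ne_top ℙ _), hη y, if_neg (not_le.mpr hy)]
  have hμ0 : μ (Iic 0) = 0 := by
    rw [hμIic 0]; simp [maxUExpCDF]
  have hpair : ℙ.map (fun ω => (ξ ω, η ω)) = μ.prod ν :=
    (ProbabilityTheory.indepFun_iff_map_prod_eq_prod_map_map
      hξm.aemeasurable hηm.aemeasurable).mp hind
  have hSmeas : MeasurableSet {p : ℝ × ℝ | p.2 / p.1 ≤ t} :=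
    measurableSet_le (measurable_snd.div measurable_fst) measurable_const
  have hstep1 : ℙ {ω | η ω / ξ ω ≤ t} = (μ.prod ν) {p : ℝ × ℝ | p.2 / p.1 ≤ t} := by
    rw [← hpair, Measure.map_apply (hξm.prodMk hηm) hSmeas]
    rfl
  have hstep2 : (μ.prod ν) {p : ℝ × ℝ | p.2 / p.1 ≤ t}
      = ∫⁻ x, ν {y | y / x ≤ t} ∂μ := by
    rw [Measure.prod_apply hSmeas]
    rfl
  have hae : Ioi (0:ℝ) =ᵐ[μ] univ :=
    ae_eq_univ.mpr (by rw [compl_Ioi]; exact hμ0)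
  have hstep3 : ∫⁻ x, ν {y | y / x ≤ t} ∂μ
      = ∫⁻ x in Ioi 0, ν {y | y / x ≤ t} ∂μ := by
    rw [← setLIntegral_univ, setLIntegral_congr hae.symm]
  have hstep4 : ∫⁻ x in Ioi (0:ℝ), ν {y | y / x ≤ t} ∂μ
      = ∫⁻ x in Ioi 0, ENNReal.ofReal (1 - Real.exp (-(t * x))) ∂μ := by
    apply setLIntegral_congr_fun measurableSet_Ioi
    intro x hx
    have hset : {y : ℝ | y / x ≤ t} = Iic (t * x) := by
      ext y
      simp only [mem_setOf_eq, mem_Iic, div_le_iff₀ (mem_Ioi.mp hx), mul_comm]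
    show ν {y | y / x ≤ t} = _
    rw [hset, hνIic (t * x) (mul_pos ht hx)]
  -- Fubini
  set F : ℝ × ℝ → ENNReal := fun p =>
    Set.indicator {q : ℝ × ℝ | 0 < q.2 ∧ q.2 < q.1}
      (fun q => ENNReal.ofReal (t * Real.exp (-(t * q.2)))) p with hFdef
  have hFmeas : Measurable F := by
    apply Measurable.indicator
    · fun_prop
    · exact (measurableSet_lt measurable_const measurable_snd).inter
        (measurableSet_lt measurable_snd measurable_fst)
  have hFTC : ∀ x ∈ Ioi (0:ℝ),
      ENNReal.ofReal (1 - Real.exp (-(t * x))) = ∫⁻ s, F (x, s) ∂volume := by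
    intro x hx
    have hind' : (fun s => F (x, s)) = Set.indicator (Ioo 0 x)
        (fun s => ENNReal.ofReal (t * Real.exp (-(t * s)))) := by
      funext s
      simp only [hFdef, Set.indicator, mem_setOf_eq, mem_Ioo]
    rw [hind', lintegral_indicator measurableSet_Ioo]
    have hcont : Continuous (fun s : ℝ => t * Real.exp (-(t * s))) := by fun_prop
    have hintg : IntegrableOn (fun s : ℝ => t * Real.exp (-(t * s))) (Ioo 0 x) :=
      (hcont.integrableOn_Icc).mono_set Ioo_subset_Icc_self
    rw [← ofReal_integral_eq_lintegral_ofReal hintg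
      (Filter.Eventually.of_forall fun s => by positivity)]
    congr 1
    rw [← integral_Ioc_eq_integral_Ioo, ← intervalIntegral.integral_of_le hx.le]
    rw [intervalIntegral.integral_eq_sub_of_hasDerivAt
      (fun s _ => hasDerivAt_expneg t s) (hcont.intervalIntegrable 0 x)]
    simp only [mul_zero, neg_zero, Real.exp_zero]
    ring
  have hstep5 : ∫⁻ x in Ioi (0:ℝ), ENNReal.ofReal (1 - Real.exp (-(t * x))) ∂μ
      = ∫⁻ x in Ioi 0, (∫⁻ s, F (x, s) ∂volume) ∂μ :=
    setLIntegral_congr_fun measurableSet_Ioi hFTC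
  have hswap : ∫⁻ x in Ioi (0:ℝ), (∫⁻ s, F (x, s) ∂volume) ∂μ
      = ∫⁻ s, (∫⁻ x in Ioi 0, F (x, s) ∂μ) ∂volume := by
    exact lintegral_lintegral_swap hFmeas.aemeasurable
  have hinner : ∀ s : ℝ, ∫⁻ x in Ioi (0:ℝ), F (x, s) ∂μ
      = Set.indicator (Ioi 0) (fun u => ENNReal.ofReal
          (t * Real.exp (-(t * u)) * (1 - maxUExpCDF a lam u))) s := by
    intro s
    by_cases hs : 0 < s
    · have h1 : (fun x => F (x, s)) = Set.indicator (Ioi s)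
          (fun _ => ENNReal.ofReal (t * Real.exp (-(t * s)))) := by
        funext x
        simp only [hFdef, Set.indicator, mem_setOf_eq, mem_Ioi, hs, true_and]
      rw [h1, lintegral_indicator measurableSet_Ioi, setLIntegral_const,
        Measure.restrict_apply measurableSet_Ioi,
        inter_eq_self_of_subset_left (Ioi_subset_Ioi hs.le)]
      have h2 : μ (Ioi s) = ENNReal.ofReal (1 - maxUExpCDF a lam s) := by
        rw [← compl_Iic, measure_compl measurableSet_Iic (measure_ne_top _ _),
          measure_univ, hμIic s, ← ENNReal.ofReal_one,
          ← ENNReal.ofReal_sub _ (maxUExpCDF_mem a lam ha hlam s).1]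
      rw [h2, Set.indicator_of_mem (show s ∈ Ioi (0:ℝ) from hs),
        ← ENNReal.ofReal_mul (by positivity : (0:ℝ) ≤ t * Real.exp (-(t * s)))]
    · have h1 : (fun x => F (x, s)) = fun _ => 0 := by
        funext x
        simp only [hFdef, Set.indicator, mem_setOf_eq]
        rw [if_neg (by tauto)]
      rw [h1, lintegral_const, zero_mul]
      exact (Set.indicator_of_notMem (by simpa using hs) _).symm
  have hstep6 : ∫⁻ s, (∫⁻ x in Ioi (0:ℝ), F (x, s) ∂μ) ∂volume
      = ∫⁻ s in Ioi 0, ENNReal.ofReal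
          (t * Real.exp (-(t * s)) * (1 - maxUExpCDF a lam s)) := by
    rw [lintegral_congr hinner, lintegral_indicator measurableSet_Ioi]
  have hg_nonneg : ∀ s : ℝ, 0 ≤ t * Real.exp (-(t * s)) * (1 - maxUExpCDF a lam s) := by
    intro s
    have := (maxUExpCDF_mem a lam ha hlam s).2
    have h0 : (0:ℝ) ≤ t * Real.exp (-(t * s)) := by positivity
    nlinarith
  have hstep7 : ∫⁻ s in Ioi (0:ℝ), ENNReal.ofReal
        (t * Real.exp (-(t * s)) * (1 - maxUExpCDF a lam s))
      = ENNReal.ofReal (∫ s in Ioi (0:ℝ),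
          t * Real.exp (-(t * s)) * (1 - maxUExpCDF a lam s)) :=
    (ofReal_integral_eq_lintegral_ofReal (integrableOn_g a lam t ha hlam ht)
      (Filter.Eventually.of_forall fun s => hg_nonneg s)).symm
  rw [hstep1, hstep2, hstep3, hstep4, hstep5, hswap, hstep6, hstep7,
    ENNReal.toReal_ofReal (setIntegral_nonneg measurableSet_Ioi fun s _ => hg_nonneg s),
    integral_g_value a lam t ha hlam ht]
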